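/- Let M be the minimal generating set of a monomial ideal with a total order ≻, let σ ⊆ M, and let m ∈ M be a gap of σ. Say that m and m' ∈ σ share a factor unique within σ if there exist a variable x and an integer n ≥ 1 such that the exponent of x in m and the exponent of x in m' both equal n, while the exponent of x in every element of σ∖{m'} is strictly less than n. If m divides lcm({m' ∈ σ : m' ≻ m, or m and m' do not share a factor unique within σ}), then m is a true gap of σ. -/
import Mathlib


open scoped Classical

noncomputable section

namespace ChauHaMaithani

variable {V : Type*}

/-- The lcm of a finite set of monomials (exponent vectors): pointwise maximum. -/
def mlcm (σ : Finset (V → ℕ)) : V → ℕ := fun v => σ.sup fun g => g v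

/-- `m` is a bridge of `σ`: `m ∈ σ` and dropping `m` does not change the lcm. -/
def IsBridge (σ : Finset (V → ℕ)) (m : V → ℕ) : Prop :=
  m ∈ σ ∧ mlcm (σ.erase m) = mlcm σ

/-- `m` is a gap of `σ`: `m ∉ σ` and adding `m` does not change the lcm. -/
def IsGap (σ : Finset (V → ℕ)) (m : V → ℕ) : Prop :=
  m ∉ σ ∧ mlcm (insert m σ) = mlcm σ

/-- A total order `≻` on monomials is encoded by a ranking function `ord`:
`m ≻ m'` iff `ord m' < ord m` (injectivity on the generating set is assumed separately).
`m` is a true gap of `σ` if it is a gap and every bridge of `σ ∪ {m}` dominated by `m`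
is already a bridge of `σ`. -/
def IsTrueGap (ord : (V → ℕ) → ℕ) (σ : Finset (V → ℕ)) (m : V → ℕ) : Prop :=
  IsGap σ m ∧ ∀ m', IsBridge (insert m σ) m' → ord m' < ord m → IsBridge σ m'

/-- `σ` is type-1: it has a true gap (in `M`) dominating none of its bridges. -/
def Type1 (M : Finset (V → ℕ)) (ord : (V → ℕ) → ℕ) (σ : Finset (V → ℕ)) : Prop :=
  ∃ m ∈ M, IsTrueGap ord σ m ∧ ∀ b, IsBridge σ b → ¬ ord b < ord m

/-- `σ` is potentially-type-2: it has a bridge dominating none of its true gaps. -/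
def PotType2 (M : Finset (V → ℕ)) (ord : (V → ℕ) → ℕ) (σ : Finset (V → ℕ)) : Prop :=
  ∃ b, IsBridge σ b ∧ ∀ m ∈ M, IsTrueGap ord σ m → ¬ ord m < ord b

/-- `b` is the `≻`-smallest bridge of `σ`. -/
def IsSBridge (ord : (V → ℕ) → ℕ) (σ : Finset (V → ℕ)) (b : V → ℕ) : Prop :=
  IsBridge σ b ∧ ∀ b', IsBridge σ b' → ord b ≤ ord b'

/-- `σ` is type-2. -/
def Type2 (M : Finset (V → ℕ)) (ord : (V → ℕ) → ℕ) (σ : Finset (V → ℕ)) : Prop :=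
  PotType2 M ord σ ∧
    ∀ σ' : Finset (V → ℕ), σ' ⊆ M → σ' ≠ σ → PotType2 M ord σ' →
      ∀ b b', IsSBridge ord σ b → IsSBridge ord σ' b' →
        σ'.erase b' = σ.erase b → ord b < ord b'

/-- `M` (the minimal generating set of a monomial ideal) is bridge-friendly w.r.t. `ord`:
every potentially-type-2 subset is type-2. -/
def BridgeFriendlyWrt (M : Finset (V → ℕ)) (ord : (V → ℕ) → ℕ) : Prop :=
  ∀ σ ⊆ M, PotType2 M ord σ → Type2 M ord σ

/-- `M` is bridge-friendly: bridge-friendly w.r.t. some total order on `M`. -/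
def BridgeFriendly (M : Finset (V → ℕ)) : Prop :=
  ∃ ord : (V → ℕ) → ℕ, Set.InjOn ord M ∧ BridgeFriendlyWrt M ord

/-- `σ = {m_1 ≻ ⋯ ≻ m_k} ⊆ M` is Lyubeznik-critical w.r.t. `ord`: there is no `m ∈ M` with
`m_t ≻ m` and `m ∣ lcm(m_1, …, m_t)` for some `1 < t ≤ k`. -/
def LyubCritical (M : Finset (V → ℕ)) (ord : (V → ℕ) → ℕ) (σ : Finset (V → ℕ)) : Prop :=
  σ ⊆ M ∧ ¬ ∃ m ∈ M, ∃ t ∈ σ, (∃ u ∈ σ, ord t < ord u) ∧ ord m < ord t ∧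
      ∀ v, m v ≤ mlcm (σ.filter fun g => ord t ≤ ord g) v

/-- `M` is Lyubeznik: for some total order on `M`, no Lyubeznik-critical subset has a
bridge (equivalently, the associated Lyubeznik resolution is minimal). -/
def IsLyubeznik (M : Finset (V → ℕ)) : Prop :=
  ∃ ord : (V → ℕ) → ℕ, Set.InjOn ord M ∧
    ∀ σ : Finset (V → ℕ), LyubCritical M ord σ → ∀ b, ¬ IsBridge σ b

/-- The quadratic monomial `xy` attached to an edge `e = {x,y}`. -/
def edgeMon (e : Sym2 V) : V → ℕ := fun v => if v ∈ e then 1 else 0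

/-- `mingens(I(G))`: the edge monomials of `G`. -/
def edgeGens [Fintype V] (G : SimpleGraph V) : Finset (V → ℕ) :=
  (Finset.univ.filter fun e : Sym2 V => e ∈ G.edgeSet).image edgeMon

/-- `mingens(I(G)^n)`: the monomials that are products of `n` edges of `G`. -/
def edgePowGens [Fintype V] (G : SimpleGraph V) (n : ℕ) : Finset (V → ℕ) :=
  (Finset.univ.filter fun f : Fin n → Sym2 V => ∀ i, f i ∈ G.edgeSet).image
    fun f => ∑ i, edgeMon (f i)

/-- A graph is chordal if it contains no induced cycle of length at least 4. -/
def Chordal (G : SimpleGraph V) : Prop :=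
  ∀ n, 4 ≤ n → IsEmpty (SimpleGraph.cycleGraph n ↪g G)

/-- `m` and `m' ∈ σ` share a factor `x^n` unique within `σ`. -/
def SharesUniqueFactor (σ : Finset (V → ℕ)) (m m' : V → ℕ) : Prop :=
  ∃ (x : V) (n : ℕ), 1 ≤ n ∧ m x = n ∧ m' x = n ∧ ∀ g ∈ σ.erase m', g x < n

/-- **Corollary 2.12.** If a gap `m` of `σ` divides the lcm of the elements of `σ` that
either dominate `m` or share no factor with `m` unique within `σ`, then `m` is a true
gap of `σ`. -/
theorem trueGap_of_dvd_lcm {V : Type*} (M : Finset (V → ℕ)) (ord : (V → ℕ) → ℕ)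
    (σ : Finset (V → ℕ)) (hσ : σ ⊆ M) (m : V → ℕ) (hm : m ∈ M) (hgap : IsGap σ m)
    (hdvd : ∀ v, m v ≤ mlcm (σ.filter fun m' =>
        ord m < ord m' ∨ ¬ SharesUniqueFactor σ m m') v) :
    IsTrueGap ord σ m := by
  refine ⟨hgap, ?_⟩
  intro m' hb hlt
  have hne : m' ≠ m := fun h => by simp [h] at hlt
  have hm'σ : m' ∈ σ := by
    rcases Finset.mem_insert.mp hb.1 with h | h
    · exact absurd h hne
    · exact h
  have hkey : ∀ v, mlcm ((insert m σ).erase m') v = max (m v) (mlcm (σ.erase m') v) := by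
    intro v
    rw [Finset.erase_insert_of_ne hne.symm]
    simp [mlcm, Finset.sup_insert]
  have hLσ : mlcm (insert m σ) = mlcm σ := hgap.2
  have hmain : ∀ v, m v ≤ mlcm (σ.erase m') v := by
    intro v
    by_contra hlt'
    push_neg at hlt'
    -- mlcm σ v = max (m v) (mlcm (σ.erase m') v) via bridge property
    have h1 : max (m v) (mlcm (σ.erase m') v) = mlcm σ v := by
      rw [← hkey v, hb.2, hLσ]
    have hmv : m v = mlcm σ v := by
      rw [← h1]; exact (max_eq_left hlt'.le).symm
    set n := m v with hn
    have hpos : 1 ≤ n := lt_of_le_of_lt (Nat.zero_le _) hlt'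
    have hgle : ∀ g ∈ σ.erase m', g v < n := by
      intro g hg
      exact lt_of_le_of_lt (Finset.le_sup (f := fun g => g v) hg) hlt'
    have hm'v : m' v = n := by
      have hle : m' v ≤ mlcm σ v := Finset.le_sup (f := fun g => g v) hm'σ
      rcases lt_or_eq_of_le hle with h | h
      · -- then mlcm σ v achieved only in erase, contradiction
        have : mlcm σ v ≤ max (m' v) (mlcm (σ.erase m') v) := by
          have : σ = insert m' (σ.erase m') := (Finset.insert_erase hm'σ).symm
          conv_lhs => rw [this]
          simp [mlcm, Finset.sup_insert]
        rw [← hmv] at h this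
        omega
      · rw [h, ← hmv]
    have hsuf : SharesUniqueFactor σ m m' := ⟨v, n, hpos, rfl, hm'v, hgle⟩
    have hsub : (σ.filter fun g => ord m < ord g ∨ ¬ SharesUniqueFactor σ m g) ⊆
        σ.erase m' := by
      intro g hg
      rw [Finset.mem_filter] at hg
      refine Finset.mem_erase.mpr ⟨?_, hg.1⟩
      rintro rfl
      rcases hg.2 with h | h
      · omega
      · exact h hsuf
    have := hdvd v
    have hle2 : mlcm (σ.filter fun g => ord m < ord g ∨ ¬ SharesUniqueFactor σ m g) v ≤
        mlcm (σ.erase m') v := Finset.sup_mono hsub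
    omega
  refine ⟨hm'σ, ?_⟩
  funext v
  have h1 : max (m v) (mlcm (σ.erase m') v) = mlcm σ v := by
    rw [← hkey v, hb.2, hLσ]
  rw [← h1, max_eq_right (hmain v)]

end ChauHaMaithani
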